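/- Let q be a real number with 0 < q < 1, let k ≥ 1 and n ≥ 1 be natural numbers, and let θ_1, …, θ_k be real numbers with 0 < θ_j < 1 for each j. Then the negative q-multinomial distribution of the second kind with parameters n, (θ_1,…,θ_k), q is a probability distribution: the family indexed by tuples (w_1,…,w_k) ∈ ℕ^k of terms C_q(n + s_k − 1; w_1,…,w_k) · ∏_{j=1}^{k} [ θ_j^{w_j} · ∏_{i=1}^{n + s_k − s_j} (1 − θ_j q^{i−1}) ] is summable with sum equal to 1; here s_j = w_1 + ⋯ + w_j and s_k = w_1 + ⋯ + w_k. -/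

import Mathlib

set_option linter.unusedSectionVars false
set_option linter.unusedTactic false
set_option maxHeartbeats 1000000

noncomputable def qNum (q : ℝ) (m : ℤ) : ℝ := (1 - q ^ m) / (1 - q)

noncomputable def qFactorial (q : ℝ) (n : ℕ) : ℝ :=
  ∏ i ∈ Finset.range n, qNum q ((i : ℤ) + 1)

noncomputable def qFacOrd (q : ℝ) (x : ℤ) (r : ℕ) : ℝ :=
  ∏ i ∈ Finset.range r, qNum q (x - (i : ℤ))

noncomputable def qMultinomial (q : ℝ) (x : ℤ) {k : ℕ} (r : Fin k → ℕ) : ℝ :=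
  qFacOrd q x (∑ j, r j) / ∏ j, qFactorial q (r j)

noncomputable def bq (q : ℝ) (N w : ℕ) : ℝ :=
  ∏ i ∈ Finset.range w, ((1 - q ^ (N + i)) / (1 - q ^ (i + 1)))

section lemmas
variable {q : ℝ} (hq0 : 0 < q) (hq1 : q < 1)
include hq0 hq1

lemma one_sub_pow_pos (m : ℕ) : 0 < 1 - q ^ (m + 1) := by
  have : q ^ (m + 1) < 1 := pow_lt_one₀ hq0.le hq1 (Nat.succ_ne_zero m)
  linarith

lemma one_sub_pow_nonneg (m : ℕ) : 0 ≤ 1 - q ^ m := by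
  have : q ^ m ≤ 1 := pow_le_one₀ hq0.le hq1.le
  linarith

lemma bq_nonneg (N w : ℕ) : 0 ≤ bq q N w := by
  apply Finset.prod_nonneg
  intro i _
  exact div_nonneg (one_sub_pow_nonneg hq0 hq1 _) (one_sub_pow_pos hq0 hq1 i).le

lemma bq_eq (N a : ℕ) (hN : 1 ≤ N) :
    qFacOrd q ((N : ℤ) + a - 1) a / qFactorial q a = bq q N a := by
  have hq : (1 : ℝ) - q ≠ 0 := by linarith
  have h1 : qFacOrd q ((N : ℤ) + a - 1) a
      = ∏ i ∈ Finset.range a, ((1 - q ^ (N + (a - 1) - i)) / (1 - q)) := by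
    unfold qFacOrd
    refine Finset.prod_congr rfl fun i hi => ?_
    rw [Finset.mem_range] at hi
    have : (N : ℤ) + a - 1 - i = ((N + (a - 1) - i : ℕ) : ℤ) := by push_cast; omega
    rw [qNum, this, zpow_natCast]
  have h2 : ∏ i ∈ Finset.range a, ((1 - q ^ (N + (a - 1) - i)) / (1 - q))
      = ∏ i ∈ Finset.range a, ((1 - q ^ (N + i)) / (1 - q)) := by
    rw [← Finset.prod_range_reflect (fun i => (1 - q ^ (N + i)) / (1 - q)) a]
    refine Finset.prod_congr rfl fun i hi => ?_
    rw [Finset.mem_range] at hi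
    have he : N + (a - 1) - i = N + (a - 1 - i) := by omega
    rw [he]
  have h3 : qFactorial q a = ∏ i ∈ Finset.range a, ((1 - q ^ (i + 1)) / (1 - q)) := by
    unfold qFactorial
    refine Finset.prod_congr rfl fun i hi => ?_
    rw [qNum]
    norm_cast
  rw [h1, h2, h3, bq, ← Finset.prod_div_distrib]
  refine Finset.prod_congr rfl fun i hi => ?_
  rw [div_div_div_cancel_right₀]
  exact hq

lemma bq_pascal (N a : ℕ) :
    bq q (N + 1) (a + 1) = bq q (N + 1) a + q ^ (a + 1) * bq q N (a + 1) := by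
  have hne : ∀ m : ℕ, (1 : ℝ) - q ^ (m + 1) ≠ 0 := fun m => (one_sub_pow_pos hq0 hq1 m).ne'
  have hb : ∀ N w : ℕ, bq q N w
      = (∏ i ∈ Finset.range w, (1 - q ^ (N + i))) / (∏ i ∈ Finset.range w, (1 - q ^ (i + 1))) := by
    intro N w
    rw [bq, Finset.prod_div_distrib]
  have hQ : (∏ i ∈ Finset.range a, (1 - q ^ (i + 1))) ≠ 0 :=
    Finset.prod_ne_zero_iff.mpr fun i _ => hne i
  have hP1 : ∏ i ∈ Finset.range (a + 1), (1 - q ^ (N + 1 + i))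
      = (∏ i ∈ Finset.range a, (1 - q ^ (N + 1 + i))) * (1 - q ^ (N + 1 + a)) :=
    Finset.prod_range_succ _ _
  have hP2 : ∏ i ∈ Finset.range (a + 1), (1 - q ^ (N + i))
      = (1 - q ^ N) * ∏ i ∈ Finset.range a, (1 - q ^ (N + 1 + i)) := by
    rw [Finset.prod_range_succ']
    rw [mul_comm]
    congr 1
    · refine Finset.prod_congr rfl fun i _ => ?_
      have he : N + (i + 1) = N + 1 + i := by omega
      rw [he]
  have hD : ∏ i ∈ Finset.range (a + 1), (1 - q ^ (i + 1))
      = (∏ i ∈ Finset.range a, (1 - q ^ (i + 1))) * (1 - q ^ (a + 1)) :=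
    Finset.prod_range_succ _ _
  rw [hb, hb, hb, hP1, hP2, hD]
  have e1 : (1 : ℝ) - q ^ (N + 1 + a) = (1 - q ^ (a + 1)) + q ^ (a + 1) * (1 - q ^ N) := by
    have h2 : q ^ (N + 1 + a) = q ^ (a + 1) * q ^ N := by rw [← pow_add]; ring_nf
    rw [h2]; ring
  have hB := hne a
  rw [e1]
  field_simp

lemma bq_hockey (N w : ℕ) :
    bq q (N + 1) w = ∑ j ∈ Finset.range (w + 1), q ^ j * bq q N j := by
  induction w with
  | zero => simp [bq]
  | succ w ih =>
    rw [Finset.sum_range_succ, ← ih, bq_pascal hq0 hq1]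

lemma qbinom_hasSum : ∀ N, 1 ≤ N → ∀ t : ℝ, 0 ≤ t → t < 1 →
    HasSum (fun w => bq q N w * t ^ w) (∏ i ∈ Finset.range N, (1 - t * q ^ i))⁻¹ := by
  refine Nat.le_induction ?_ ?_
  · intro t ht0 ht1
    have h1 : ∀ w, bq q 1 w = 1 := by
      intro w
      rw [bq]
      refine Finset.prod_eq_one fun i _ => ?_
      rw [add_comm 1 i, div_self (one_sub_pow_pos hq0 hq1 i).ne']
    have := hasSum_geometric_of_lt_one ht0 ht1
    simp only [h1, one_mul]
    simpa using this
  · intro N hN IH t ht0 ht1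
    have hqt0 : (0:ℝ) ≤ q * t := by positivity
    have hqt1 : q * t < 1 := by nlinarith
    have hqt := IH (q * t) hqt0 hqt1
    have hgeo := hasSum_geometric_of_lt_one ht0 ht1
    have hfn : Summable fun j => ‖bq q N j * (q * t) ^ j‖ := by
      refine hqt.summable.congr fun j => ?_
      rw [Real.norm_of_nonneg (mul_nonneg (bq_nonneg hq0 hq1 _ _) (by positivity))]
    have hgn : Summable fun i => ‖t ^ i‖ := by
      refine hgeo.summable.congr fun i => ?_
      rw [Real.norm_of_nonneg]
      positivity
    have key := hasSum_sum_range_mul_of_summable_norm hfn hgn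
    rw [hqt.tsum_eq, hgeo.tsum_eq] at key
    have hterm : ∀ w : ℕ, (∑ j ∈ Finset.range (w + 1), (bq q N j * (q * t) ^ j) * t ^ (w - j))
        = bq q (N + 1) w * t ^ w := by
      intro w
      rw [bq_hockey hq0 hq1, Finset.sum_mul]
      refine Finset.sum_congr rfl fun j hj => ?_
      rw [Finset.mem_range] at hj
      have : (q * t) ^ j * t ^ (w - j) = q ^ j * t ^ w := by
        rw [mul_pow, mul_assoc, ← pow_add]
        congr 2
        omega
      rw [mul_assoc, this]
      ring
    have hval : (∏ i ∈ Finset.range N, (1 - q * t * q ^ i))⁻¹ * (1 - t)⁻¹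
        = (∏ i ∈ Finset.range (N + 1), (1 - t * q ^ i))⁻¹ := by
      rw [Finset.prod_range_succ']
      rw [mul_inv]
      congr 1
      · congr 1
        refine Finset.prod_congr rfl fun i _ => ?_
        rw [pow_succ]
        ring
      · norm_num
    rw [← hval]
    simpa only [hterm] using key

lemma head_hasSum (M : ℕ) (hM : 1 ≤ M) (θ : ℝ) (hθ0 : 0 ≤ θ) (hθ1 : θ < 1) :
    HasSum (fun a => bq q M a * θ ^ a * ∏ i ∈ Finset.range M, (1 - θ * q ^ i)) 1 := by
  have hC : 0 < ∏ i ∈ Finset.range M, (1 - θ * q ^ i) := by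
    refine Finset.prod_pos fun i _ => ?_
    have h1 : q ^ i ≤ 1 := pow_le_one₀ hq0.le hq1.le
    nlinarith
  have h := (qbinom_hasSum hq0 hq1 M hM θ hθ0 hθ1).mul_right
    (∏ i ∈ Finset.range M, (1 - θ * q ^ i))
  rwa [inv_mul_cancel₀ hC.ne'] at h

lemma qNum_nonneg (m : ℤ) (hm : 0 ≤ m) : 0 ≤ qNum q m := by
  obtain ⟨l, rfl⟩ := Int.eq_ofNat_of_zero_le hm
  rw [qNum, zpow_natCast]
  exact div_nonneg (one_sub_pow_nonneg hq0 hq1 l) (by linarith)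

lemma qFacOrd_add (x : ℤ) (r s : ℕ) :
    qFacOrd q x (r + s) = qFacOrd q x r * qFacOrd q (x - (r : ℤ)) s := by
  unfold qFacOrd
  rw [Finset.prod_range_add]
  congr 1
  refine Finset.prod_congr rfl fun i _ => ?_
  congr 1
  push_cast
  ring

end lemmas

noncomputable def Fterm (q : ℝ) (n : ℕ) {k : ℕ} (θ : Fin k → ℝ) (w : Fin k → ℕ) : ℝ :=
  qMultinomial q ((n : ℤ) + (∑ i, w i) - 1) w *
    ∏ j : Fin k,
      θ j ^ w j *
        ∏ i ∈ Finset.range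
            (n + (∑ i', w i') - ∑ i' ∈ Finset.univ.filter (fun i' => i' ≤ j), w i'),
          (1 - θ j * q ^ i)

section F
variable {q : ℝ} (hq0 : 0 < q) (hq1 : q < 1) {n : ℕ}
include hq0 hq1

lemma Fterm_nonneg (hn : 1 ≤ n) {k : ℕ} (θ : Fin k → ℝ) (hθ0 : ∀ j, 0 ≤ θ j)
    (hθ1 : ∀ j, θ j ≤ 1) (w : Fin k → ℕ) : 0 ≤ Fterm q n θ w := by
  unfold Fterm qMultinomial
  apply mul_nonneg
  · apply div_nonneg
    · unfold qFacOrd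
      apply Finset.prod_nonneg
      intro i hi
      rw [Finset.mem_range] at hi
      apply qNum_nonneg hq0 hq1
      omega
    · apply Finset.prod_nonneg
      intro j _
      unfold qFactorial
      apply Finset.prod_nonneg
      intro i _
      exact qNum_nonneg hq0 hq1 _ (by positivity)
  · apply Finset.prod_nonneg
    intro j _
    apply mul_nonneg (pow_nonneg (hθ0 j) _)
    apply Finset.prod_nonneg
    intro i _
    have h1 : q ^ i ≤ 1 := pow_le_one₀ hq0.le hq1.le
    nlinarith [hθ0 j, hθ1 j]

lemma Fterm_cons (hn : 1 ≤ n) {k : ℕ} (θ : Fin (k + 1) → ℝ) (a : ℕ) (v : Fin k → ℕ) :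
    Fterm q n θ (Fin.cons a v) =
      (bq q (n + ∑ i, v i) a * θ 0 ^ a *
          ∏ i ∈ Finset.range (n + ∑ i, v i), (1 - θ 0 * q ^ i)) *
        Fterm q n (fun j => θ j.succ) v := by
  set T := ∑ i, v i with hT
  have h1 : qMultinomial q ((n : ℤ) + ((a : ℕ) + T : ℕ) - 1) (Fin.cons a v)
      = bq q (n + T) a * qMultinomial q ((n : ℤ) + (T : ℕ) - 1) v := by
    unfold qMultinomial
    rw [Fin.sum_cons, Fin.prod_univ_succ]
    simp only [Fin.cons_zero, Fin.cons_succ]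
    rw [qFacOrd_add hq0 hq1, ← div_mul_div_comm]
    congr 1
    · rw [← bq_eq hq0 hq1 (n + T) a (by omega)]
      congr 2
      push_cast
      ring
    · congr 2
      push_cast
      ring
  have hfil0 : (Finset.univ.filter (fun i' : Fin (k + 1) => i' ≤ 0)) = {0} := by
    ext i'
    simp [Fin.le_zero_iff]
  have hs0 : ∑ i' ∈ Finset.univ.filter (fun i' : Fin (k + 1) => i' ≤ 0), (Fin.cons a v) i'
      = a := by
    rw [hfil0, Finset.sum_singleton, Fin.cons_zero]
  have hsj : ∀ j : Fin k,
      ∑ i' ∈ Finset.univ.filter (fun i' => i' ≤ j.succ), (Fin.cons a v) i'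
        = a + ∑ i' ∈ Finset.univ.filter (fun i' => i' ≤ j), v i' := by
    intro j
    rw [Finset.sum_filter, Finset.sum_filter, Fin.sum_univ_succ]
    simp only [Fin.cons_zero, Fin.cons_succ, Fin.succ_le_succ_iff, Fin.zero_le, if_true]
  have h2 : (∏ j : Fin (k + 1),
        θ j ^ (Fin.cons a v) j *
          ∏ i ∈ Finset.range
              (n + (a + T) - ∑ i' ∈ Finset.univ.filter (fun i' => i' ≤ j), (Fin.cons a v) i'),
            (1 - θ j * q ^ i))
      = (θ 0 ^ a * ∏ i ∈ Finset.range (n + T), (1 - θ 0 * q ^ i)) *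
        ∏ j : Fin k,
          θ j.succ ^ v j *
            ∏ i ∈ Finset.range
                (n + T - ∑ i' ∈ Finset.univ.filter (fun i' => i' ≤ j), v i'),
              (1 - θ j.succ * q ^ i) := by
    rw [Fin.prod_univ_succ]
    congr 1
    · rw [Fin.cons_zero, hs0]
      have he : n + (a + T) - a = n + T := by omega
      rw [he]
    · refine Finset.prod_congr rfl fun j _ => ?_
      rw [Fin.cons_succ, hsj j]
      have he : n + (a + T) - (a + ∑ i' ∈ Finset.univ.filter (fun i' => i' ≤ j), v i')
          = n + T - ∑ i' ∈ Finset.univ.filter (fun i' => i' ≤ j), v i' := by omega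
      rw [he]
  unfold Fterm
  simp only [Fin.sum_cons, ← hT]
  rw [h1, h2]
  ring

lemma key_tsum (hn : 1 ≤ n) : ∀ k (θ : Fin k → ℝ), (∀ j, 0 < θ j) → (∀ j, θ j < 1) →
    ∑' w : Fin k → ℕ, ENNReal.ofReal (Fterm q n θ w) = 1 := by
  intro k
  induction k with
  | zero =>
    intro θ hθ0 hθ1
    have hu : ∀ w : Fin 0 → ℕ, Fterm q n θ w = 1 := by
      intro w
      simp [Fterm, qMultinomial, qFacOrd]
    rw [tsum_eq_single (default : Fin 0 → ℕ)
      (fun b hb => absurd (Subsingleton.elim b default) hb), hu, ENNReal.ofReal_one]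
  | succ k ih =>
    intro θ hθ0 hθ1
    have e1 : ∑' w : Fin (k + 1) → ℕ, ENNReal.ofReal (Fterm q n θ w)
        = ∑' p : ℕ × (Fin k → ℕ), ENNReal.ofReal (Fterm q n θ (Fin.cons p.1 p.2)) := by
      rw [← (Fin.consEquiv (fun _ : Fin (k + 1) => ℕ)).tsum_eq
          (fun w => ENNReal.ofReal (Fterm q n θ w))]
      rfl
    rw [e1, ENNReal.tsum_prod', ENNReal.tsum_comm]
    have inner : ∀ v : Fin k → ℕ, ∑' a : ℕ, ENNReal.ofReal (Fterm q n θ (Fin.cons a v))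
        = ENNReal.ofReal (Fterm q n (fun j => θ j.succ) v) := by
      intro v
      have hhead := head_hasSum hq0 hq1 (n + ∑ i, v i) (by omega) (θ 0) (hθ0 0).le (hθ1 0)
      have hnn : ∀ a : ℕ, 0 ≤ bq q (n + ∑ i, v i) a * θ 0 ^ a *
          ∏ i ∈ Finset.range (n + ∑ i, v i), (1 - θ 0 * q ^ i) := by
        intro a
        apply mul_nonneg (mul_nonneg (bq_nonneg hq0 hq1 _ _) (pow_nonneg (hθ0 0).le _))
        apply Finset.prod_nonneg
        intro i _
        have h1 : q ^ i ≤ 1 := pow_le_one₀ hq0.le hq1.le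
        nlinarith [hθ0 0, hθ1 0]
      have step1 : ∑' a : ℕ, ENNReal.ofReal (Fterm q n θ (Fin.cons a v))
          = (∑' a : ℕ, ENNReal.ofReal (bq q (n + ∑ i, v i) a * θ 0 ^ a *
              ∏ i ∈ Finset.range (n + ∑ i, v i), (1 - θ 0 * q ^ i))) *
            ENNReal.ofReal (Fterm q n (fun j => θ j.succ) v) := by
        rw [← ENNReal.tsum_mul_right]
        refine tsum_congr fun a => ?_
        rw [Fterm_cons hq0 hq1 hn, ENNReal.ofReal_mul (hnn a)]
      rw [step1, ← ENNReal.ofReal_tsum_of_nonneg hnn hhead.summable, hhead.tsum_eq,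
        ENNReal.ofReal_one, one_mul]
    rw [tsum_congr inner]
    exact ih (fun j => θ j.succ) (fun j => hθ0 j.succ) (fun j => hθ1 j.succ)

end F

/-- The negative q-multinomial distribution of the second kind is a probability distribution:
    the family over (w_1,…,w_k) ∈ ℕ^k of terms
    C_q(n+s_k−1; w) ∏_j θ_j^(w_j) ∏_{i=1}^{n+s_k−s_j} (1 − θ_j q^(i−1)) sums to 1. -/
theorem neg_qMultinomial_dist_second_kind (q : ℝ) (hq0 : 0 < q) (hq1 : q < 1)
    (k n : ℕ) (hk : 1 ≤ k) (hn : 1 ≤ n) (θ : Fin k → ℝ)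
    (hθ0 : ∀ j, 0 < θ j) (hθ1 : ∀ j, θ j < 1) :
    HasSum
      (fun w : Fin k → ℕ =>
        qMultinomial q ((n : ℤ) + (∑ i, w i) - 1) w *
          ∏ j : Fin k,
            θ j ^ w j *
              ∏ i ∈ Finset.range
                  (n + (∑ i', w i') - ∑ i' ∈ Finset.univ.filter (fun i' => i' ≤ j), w i'),
                (1 - θ j * q ^ i))
      1 := by
  have hkey := key_tsum hq0 hq1 hn k θ hθ0 hθ1
  have hnn : ∀ w, 0 ≤ Fterm q n θ w :=
    Fterm_nonneg hq0 hq1 hn θ (fun j => (hθ0 j).le) (fun j => (hθ1 j).le)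
  have hsummable : Summable (Fterm q n θ) := by
    have h := ENNReal.summable_toReal (f := fun w => ENNReal.ofReal (Fterm q n θ w))
      (by rw [hkey]; exact ENNReal.one_ne_top)
    refine h.congr fun w => ?_
    rw [ENNReal.toReal_ofReal (hnn w)]
  have htsum : ∑' w, Fterm q n θ w = 1 := by
    have h3 : ∑' w, Fterm q n θ w = ∑' w, (ENNReal.ofReal (Fterm q n θ w)).toReal :=
      tsum_congr fun w => (ENNReal.toReal_ofReal (hnn w)).symm
    rw [h3, ← ENNReal.tsum_toReal_eq (fun w => ENNReal.ofReal_ne_top), hkey, ENNReal.toReal_one]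
  exact hsummable.hasSum_iff.mpr htsum
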